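/- Let ℑ(x) = ∫₀ˣ √(2/π)·exp(u²/2) du. For every real x ≠ 0, lim_{c→∞} c·ℑ(c·x) / exp(c²x²/2) = √(2/π) · (1/x). -/

import Mathlib

open Filter

noncomputable section

/-- ℑ(x) = ∫₀ˣ √(2/π)·exp(u²/2) du. -/
def ImInt (x : ℝ) : ℝ := ∫ u in (0:ℝ)..x, Real.sqrt (2 / Real.pi) * Real.exp (u ^ 2 / 2)

namespace Stmt17Aux

/-- `I t = ∫₀ᵗ e^{u²/2} du`. -/
def J (t : ℝ) : ℝ := ∫ u in (0:ℝ)..t, Real.exp (u ^ 2 / 2)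

lemma contF : Continuous (fun u : ℝ => Real.exp (u ^ 2 / 2)) := by continuity

lemma intF (a b : ℝ) :
    IntervalIntegrable (fun u : ℝ => Real.exp (u ^ 2 / 2)) MeasureTheory.volume a b :=
  contF.intervalIntegrable a b

lemma integral_exp_lin (c d a b : ℝ) (hc : c ≠ 0) :
    ∫ u in a..b, Real.exp (c * u + d)
      = (Real.exp (c * b + d) - Real.exp (c * a + d)) / c := by
  have h : ∀ u ∈ Set.uIcc a b,
      HasDerivAt (fun u => Real.exp (c * u + d) / c) (Real.exp (c * u + d)) u := by
    intro u _
    have h1 : HasDerivAt (fun u : ℝ => c * u + d) c u := by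
      simpa using ((hasDerivAt_id u).const_mul c).add_const d
    have h2 := (h1.exp).div_const c
    rwa [mul_div_cancel_right₀ _ hc] at h2
  rw [intervalIntegral.integral_eq_sub_of_hasDerivAt h
    ((Real.continuous_exp.comp (by continuity)).intervalIntegrable a b)]
  ring

lemma J_odd (t : ℝ) : J (-t) = - J t := by
  have h : J t = ∫ u in (-t)..(0:ℝ), Real.exp (u ^ 2 / 2) := by
    rw [show (0:ℝ) = -(0:ℝ) by ring]
    rw [← intervalIntegral.integral_comp_neg (fun u => Real.exp (u ^ 2 / 2))]
    simp [J, neg_zero]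
  rw [intervalIntegral.integral_symm] at h
  simp [J] at h ⊢
  linarith
  
lemma J_lower (t : ℝ) (ht : 0 < t) :
    Real.exp (t ^ 2 / 2) * ((1 - Real.exp (-(t ^ 2))) / t) ≤ J t := by
  have hmono : ∫ u in (0:ℝ)..t, Real.exp (t * u + (t ^ 2 / 2 - t ^ 2)) ≤ J t := by
    apply intervalIntegral.integral_mono_on ht.le _ (intF 0 t)
    · intro u hu
      exact Real.exp_le_exp.mpr (by nlinarith [sq_nonneg (u - t), hu.1, hu.2])
    · exact (Real.continuous_exp.comp (by continuity)).intervalIntegrable 0 t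
  rw [integral_exp_lin t _ 0 t ht.ne'] at hmono
  have e1 : t * t + (t ^ 2 / 2 - t ^ 2) = t ^ 2 / 2 := by ring
  have e2 : t * 0 + (t ^ 2 / 2 - t ^ 2) = t ^ 2 / 2 + -(t ^ 2) := by ring
  rw [e1, e2, Real.exp_add] at hmono
  have : Real.exp (t ^ 2 / 2) * ((1 - Real.exp (-(t ^ 2))) / t)
      = (Real.exp (t ^ 2 / 2) - Real.exp (t ^ 2 / 2) * Real.exp (-(t ^ 2))) / t := by ring
  rw [this]; exact hmono

lemma J_upper (t : ℝ) (ht : 1 ≤ t) :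
    J t ≤ (t - 1) * Real.exp ((t - 1) ^ 2 / 2) + Real.exp (t ^ 2 / 2) / (t - 1/2) := by
  have ht0 : (0:ℝ) < t := lt_of_lt_of_le one_pos ht
  have hsplit : J t = (∫ u in (0:ℝ)..(t-1), Real.exp (u ^ 2 / 2))
      + ∫ u in (t-1)..t, Real.exp (u ^ 2 / 2) :=
    (intervalIntegral.integral_add_adjacent_intervals (intF 0 (t-1)) (intF (t-1) t)).symm
  have h1 : (∫ u in (0:ℝ)..(t-1), Real.exp (u ^ 2 / 2)) ≤ (t - 1) * Real.exp ((t - 1) ^ 2 / 2) := by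
    have := intervalIntegral.integral_mono_on (by linarith : (0:ℝ) ≤ t - 1)
      (intF 0 (t-1)) (intervalIntegrable_const) (g := fun _ => Real.exp ((t - 1) ^ 2 / 2))
      (fun u hu => Real.exp_le_exp.mpr (by nlinarith [hu.1, hu.2]))
    calc (∫ u in (0:ℝ)..(t-1), Real.exp (u ^ 2 / 2)) ≤ _ := this
      _ = (t - 1) * Real.exp ((t - 1) ^ 2 / 2) := by
          rw [intervalIntegral.integral_const]; simp [smul_eq_mul]
  have h2 : (∫ u in (t-1)..t, Real.exp (u ^ 2 / 2)) ≤ Real.exp (t ^ 2 / 2) / (t - 1/2) := by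
    have hc : (0:ℝ) < t - 1/2 := by linarith
    have hmono : (∫ u in (t-1)..t, Real.exp (u ^ 2 / 2))
        ≤ ∫ u in (t-1)..t, Real.exp ((t - 1/2) * u + (t ^ 2 / 2 - t * (t - 1/2))) := by
      apply intervalIntegral.integral_mono_on (by linarith) (intF (t-1) t)
      · exact (Real.continuous_exp.comp (by continuity)).intervalIntegrable _ _
      · intro u hu
        apply Real.exp_le_exp.mpr
        nlinarith [mul_nonneg (sub_nonneg.2 hu.2) (sub_nonneg.2 hu.1)]
    rw [integral_exp_lin _ _ _ _ hc.ne'] at hmono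
    have e1 : (t - 1/2) * t + (t ^ 2 / 2 - t * (t - 1/2)) = t ^ 2 / 2 := by ring
    rw [e1] at hmono
    have hle : (Real.exp (t ^ 2 / 2) - Real.exp ((t - 1/2) * (t-1) + (t ^ 2 / 2 - t * (t - 1/2)))) / (t - 1/2)
        ≤ Real.exp (t ^ 2 / 2) / (t - 1/2) := by
      apply div_le_div_of_nonneg_right ?_ hc.le |>.trans_eq rfl
      have := Real.exp_pos ((t - 1/2) * (t-1) + (t ^ 2 / 2 - t * (t - 1/2)))
      linarith
    exact hmono.trans hle
  linarith

lemma phi_lower (t : ℝ) (ht : 1 ≤ t) :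
    1 - Real.exp (-t) ≤ t * Real.exp (-(t ^ 2 / 2)) * J t := by
  have ht0 : (0:ℝ) < t := lt_of_lt_of_le one_pos ht
  have h := J_lower t ht0
  have hpos : (0:ℝ) < t * Real.exp (-(t ^ 2 / 2)) := by positivity
  have h2 := mul_le_mul_of_nonneg_left h hpos.le
  have h0 : Real.exp (-(t ^ 2 / 2)) * Real.exp (t ^ 2 / 2) = 1 := by
    rw [← Real.exp_add]; norm_num
  have e1 : t * Real.exp (-(t ^ 2 / 2)) * (Real.exp (t ^ 2 / 2) * ((1 - Real.exp (-(t ^ 2))) / t))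
      = 1 - Real.exp (-(t ^ 2)) := by
    rw [show t * Real.exp (-(t ^ 2 / 2)) * (Real.exp (t ^ 2 / 2) * ((1 - Real.exp (-(t ^ 2))) / t))
        = (Real.exp (-(t ^ 2 / 2)) * Real.exp (t ^ 2 / 2)) * ((1 - Real.exp (-(t ^ 2))) * (t / t))
        by ring, h0, div_self ht0.ne', one_mul, mul_one]
  rw [e1] at h2
  have e2 : Real.exp (-(t ^ 2)) ≤ Real.exp (-t) :=
    Real.exp_le_exp.mpr (by nlinarith)
  linarith

lemma phi_upper (t : ℝ) (ht : 1 ≤ t) :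
    t * Real.exp (-(t ^ 2 / 2)) * J t
      ≤ t * (t - 1) * Real.exp (1/2 - t) + t / (t - 1/2) := by
  have ht0 : (0:ℝ) < t := lt_of_lt_of_le one_pos ht
  have hpos : (0:ℝ) < t * Real.exp (-(t ^ 2 / 2)) := by positivity
  have h2 := mul_le_mul_of_nonneg_left (J_upper t ht) hpos.le
  have h0 : Real.exp (-(t ^ 2 / 2)) * Real.exp (t ^ 2 / 2) = 1 := by
    rw [← Real.exp_add]; norm_num
  have h1 : Real.exp (-(t ^ 2 / 2)) * Real.exp ((t - 1) ^ 2 / 2) = Real.exp (1/2 - t) := by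
    rw [← Real.exp_add]; ring_nf
  have e1 : t * Real.exp (-(t ^ 2 / 2))
        * ((t - 1) * Real.exp ((t - 1) ^ 2 / 2) + Real.exp (t ^ 2 / 2) / (t - 1/2))
      = t * (t - 1) * Real.exp (1/2 - t) + t / (t - 1/2) := by
    rw [show t * Real.exp (-(t ^ 2 / 2))
          * ((t - 1) * Real.exp ((t - 1) ^ 2 / 2) + Real.exp (t ^ 2 / 2) / (t - 1/2))
        = t * (t - 1) * (Real.exp (-(t ^ 2 / 2)) * Real.exp ((t - 1) ^ 2 / 2))
          + (Real.exp (-(t ^ 2 / 2)) * Real.exp (t ^ 2 / 2)) * (t / (t - 1/2)) by ring,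
      h1, h0, one_mul]
  rw [e1] at h2
  exact h2

lemma upper_tendsto :
    Tendsto (fun t : ℝ => t * (t - 1) * Real.exp (1/2 - t) + t / (t - 1/2))
      atTop (nhds 1) := by
  have hA : Tendsto (fun t : ℝ => t * (t - 1) * Real.exp (1/2 - t)) atTop (nhds 0) := by
    have A := (Real.tendsto_pow_mul_exp_neg_atTop_nhds_zero 2).const_mul (Real.exp (1/2))
    have B := (Real.tendsto_pow_mul_exp_neg_atTop_nhds_zero 1).const_mul (Real.exp (1/2))
    have := A.sub B
    simp only [mul_zero, sub_zero] at this
    apply this.congr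
    intro t
    rw [show (1/2 - t : ℝ) = 1/2 + -t by ring, Real.exp_add]
    ring
  have hB : Tendsto (fun t : ℝ => t / (t - 1/2)) atTop (nhds 1) := by
    have h0 : Tendsto (fun t : ℝ => (t - 1/2)⁻¹) atTop (nhds 0) := by
      apply tendsto_inv_atTop_zero.comp
      exact tendsto_atTop_add_const_right atTop (-(1/2)) tendsto_id
    have h1 : Tendsto (fun t : ℝ => 1 + (1/2) * (t - 1/2)⁻¹) atTop (nhds 1) := by
      have := (h0.const_mul (1/2:ℝ)).const_add 1
      simpa using this
    apply h1.congr'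
    filter_upwards [eventually_ge_atTop (1:ℝ)] with t ht
    have hc : t - 1/2 ≠ 0 := by intro h; nlinarith
    rw [eq_div_iff hc]
    have hi : (t - 1/2)⁻¹ * (t - 1/2) = 1 := inv_mul_cancel₀ hc
    linear_combination (1/2) * hi
  simpa using hA.add hB

lemma phi_tendsto :
    Tendsto (fun t : ℝ => t * Real.exp (-(t ^ 2 / 2)) * J t) atTop (nhds 1) := by
  apply tendsto_of_tendsto_of_tendsto_of_le_of_le' ?_ upper_tendsto
  · filter_upwards [eventually_ge_atTop (1:ℝ)] with t ht using phi_lower t ht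
  · filter_upwards [eventually_ge_atTop (1:ℝ)] with t ht using phi_upper t ht
  · have := tendsto_const_nhds.sub Real.tendsto_exp_neg_atTop_nhds_zero (a := (1:ℝ))
    simpa using this

lemma phi_even (t : ℝ) :
    (-t) * Real.exp (-((-t) ^ 2 / 2)) * J (-t) = t * Real.exp (-(t ^ 2 / 2)) * J t := by
  rw [J_odd, neg_sq]; ring

end Stmt17Aux

open Stmt17Aux in
theorem stmt17 (x : ℝ) (hx : x ≠ 0) :
    Tendsto (fun c : ℝ => c * ImInt (c * x) / Real.exp (c ^ 2 * x ^ 2 / 2))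
      atTop (nhds (Real.sqrt (2 / Real.pi) * (1 / x))) := by
  set K := Real.sqrt (2 / Real.pi) with hK
  have key : ∀ c : ℝ, c * ImInt (c * x) / Real.exp (c ^ 2 * x ^ 2 / 2)
      = (K * (1/x)) * ((c * x) * Real.exp (-((c * x) ^ 2 / 2)) * J (c * x)) := by
    intro c
    have hIm : ImInt (c * x) = K * J (c * x) := by
      rw [ImInt, hK, intervalIntegral.integral_const_mul]; rfl
    rw [hIm, show -((c * x) ^ 2 / 2) = -(c ^ 2 * x ^ 2 / 2) by ring, Real.exp_neg]
    have he : Real.exp (c ^ 2 * x ^ 2 / 2) ≠ 0 := Real.exp_ne_zero _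
    field_simp
  have main : Tendsto (fun c : ℝ => (c * x) * Real.exp (-((c * x) ^ 2 / 2)) * J (c * x))
      atTop (nhds 1) := by
    rcases hx.lt_or_gt with hneg | hpos
    · have h1 : Tendsto (fun c : ℝ => c * (-x)) atTop atTop :=
        tendsto_id.atTop_mul_const (by linarith)
      have h2 := phi_tendsto.comp h1
      apply h2.congr
      intro c
      show (c * (-x)) * Real.exp (-((c * (-x)) ^ 2 / 2)) * J (c * (-x)) = _
      rw [show c * (-x) = -(c * x) by ring]
      exact phi_even (c * x)
    · have h1 : Tendsto (fun c : ℝ => c * x) atTop atTop :=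
        tendsto_id.atTop_mul_const hpos
      exact phi_tendsto.comp h1
  have := main.const_mul (K * (1/x))
  rw [mul_one] at this
  exact this.congr (fun c => (key c).symm)
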